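/- Let A_n denote the sum, over all Motzkin paths of length n, of the amplitude of the path. In the formal power series ring ℚ[[v]], where 1 + v + v² is invertible, the family (A_n · v^n · (1 + v + v²)^{−n})_{n≥0} is summable and v² · ∑_{n≥0} A_n · (v·(1 + v + v²)^{−1})^n = (1 + v + v²)·(1 − v²)·∑_{h≥1} ∑_{k≥1} v^{h·k} − v·(1 + 2v)·(1 + v + v²), where ∑_{h,k≥1} v^{hk} = ∑_{m≥1} d(m) v^m with d(m) the number of divisors of m. -/

import Mathlib

open Finset
open scoped Classical

/-- A step: `+1`, `-1` or `0`. -/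
abbrev Step : Type := ({1, -1, 0} : Finset ℤ)

/-- Partial sum of the first `k` steps. -/
def psum {n : ℕ} (w : Fin n → Step) (k : ℕ) : ℤ :=
  ∑ i : Fin n, if (i : ℕ) < k then (w i : ℤ) else 0

/-- `w` is a Motzkin path: all partial sums are nonnegative and the total sum is `0`. -/
def IsMotzkin {n : ℕ} (w : Fin n → Step) : Prop :=
  (∀ k ∈ Finset.range (n + 1), 0 ≤ psum w k) ∧ psum w n = 0

/-- The height of a path: the maximum of its partial sums (`0` for the empty path). -/
def height {n : ℕ} (w : Fin n → Step) : ℤ :=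
  (Finset.range (n + 1)).sup' (Finset.nonempty_range_iff.mpr (Nat.succ_ne_zero n)) (psum w)

/-- `w` has a horizontal step at level `j`: some step is `0` and the partial sum up to
and including that step equals `j`. -/
def HasHorizAt {n : ℕ} (w : Fin n → Step) (j : ℤ) : Prop :=
  ∃ i : Fin n, (w i : ℤ) = 0 ∧ psum w ((i : ℕ) + 1) = j

/-- The amplitude of a path of height `h` is `2h + 1` if the path has a horizontal step
at level `h`, and `2h` otherwise. -/
noncomputable def amplitude {n : ℕ} (w : Fin n → Step) : ℤ :=
  if HasHorizAt w (height w) then 2 * height w + 1 else 2 * height w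

/-- `A n` is the sum of the amplitudes of all Motzkin paths of length `n`. -/
noncomputable def A (n : ℕ) : ℤ :=
  ∑ w ∈ Finset.univ.filter fun w : Fin n → Step => IsMotzkin w, amplitude w

/-- A family of formal power series is (formally) summable if for every degree `m`
only finitely many members of the family have a nonzero coefficient of `v^m`. -/
def PSSummable (F : ℕ → PowerSeries ℚ) : Prop :=
  ∀ m : ℕ, {n : ℕ | PowerSeries.coeff m (F n) ≠ 0}.Finite

/-- The (formal) sum of a family of power series, computed coefficientwise. -/
noncomputable def PSSum (F : ℕ → PowerSeries ℚ) : PowerSeries ℚ :=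
  PowerSeries.mk fun m => ∑ᶠ n : ℕ, PowerSeries.coeff m (F n)



lemma step_cases (s : Step) : (s : ℤ) = 1 ∨ (s : ℤ) = -1 ∨ (s : ℤ) = 0 := by
  have := s.2
  rw [Finset.mem_insert, Finset.mem_insert, Finset.mem_singleton] at this
  exact this

lemma psum_zero {n : ℕ} (w : Fin n → Step) : psum w 0 = 0 := by
  simp [psum]

lemma psum_succ {n : ℕ} (w : Fin n → Step) (k : ℕ) (hk : k < n) :
    psum w (k + 1) = psum w k + (w ⟨k, hk⟩ : ℤ) := by
  unfold psum
  have : ∀ i : Fin n, (if (i : ℕ) < k + 1 then (w i : ℤ) else 0)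
      = (if (i : ℕ) < k then (w i : ℤ) else 0) + (if i = ⟨k, hk⟩ then (w i : ℤ) else 0) := by
    intro i
    rcases lt_trichotomy (i : ℕ) k with h | h | h
    · rw [if_pos (by omega), if_pos h, if_neg (by simp [Fin.ext_iff]; omega)]; ring
    · rw [if_pos (by omega), if_neg (by omega), if_pos (by simp [Fin.ext_iff, h])]; ring
    · rw [if_neg (by omega), if_neg (by omega), if_neg (by simp [Fin.ext_iff]; omega)]; ring
  rw [Finset.sum_congr rfl fun i _ => this i, Finset.sum_add_distrib,
    Finset.sum_ite_eq' Finset.univ (⟨k, hk⟩ : Fin n) (fun i => (w i : ℤ))]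
  simp

lemma psum_of_ge {n : ℕ} (w : Fin n → Step) {k : ℕ} (hk : n ≤ k) : psum w k = psum w n := by
  unfold psum
  refine Finset.sum_congr rfl fun i _ => ?_
  rw [if_pos (by omega), if_pos i.2]


lemma psum_snoc_le {n : ℕ} (w : Fin n → Step) (s : Step) {k : ℕ} (hk : k ≤ n) :
    psum (Fin.snoc w s) k = psum w k := by
  unfold psum
  rw [Fin.sum_univ_castSucc]
  simp only [Fin.coe_castSucc, Fin.snoc_castSucc, Fin.val_last]
  rw [if_neg (by omega), add_zero]

lemma psum_snoc_top {n : ℕ} (w : Fin n → Step) (s : Step) :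
    psum (Fin.snoc w s) (n + 1) = psum w n + (s : ℤ) := by
  unfold psum
  rw [Fin.sum_univ_castSucc]
  simp only [Fin.coe_castSucc, Fin.snoc_castSucc, Fin.val_last]
  rw [if_pos (by omega), Fin.snoc_last]
  congr 1
  exact Finset.sum_congr rfl fun i _ => by rw [if_pos (by omega), if_pos (by omega)]

def Good (a : ℕ) {n : ℕ} (w : Fin n → Step) : Prop :=
  (∀ k ∈ Finset.range (n + 1), 0 ≤ psum w k ∧ 2 * psum w k ≤ (a : ℤ)) ∧
  ∀ i : Fin n, (w i : ℤ) = 0 → 2 * psum w ((i : ℕ) + 1) + 1 ≤ (a : ℤ)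

noncomputable def D (a n : ℕ) (j : ℤ) : ℕ :=
  (Finset.univ.filter fun w : Fin n → Step => Good a w ∧ psum w n = j).card

lemma good_snoc {a n : ℕ} (w : Fin n → Step) (s : Step) :
    Good a (Fin.snoc w s) ↔ Good a w ∧ (0 ≤ psum w n + s ∧ 2 * (psum w n + s) ≤ (a : ℤ) ∧
      ((s : ℤ) = 0 → 2 * (psum w n + s) + 1 ≤ (a : ℤ))) := by
  constructor
  · rintro ⟨h1, h2⟩
    refine ⟨⟨fun k hk => ?_, fun i hi => ?_⟩, ?_, ?_, fun hs => ?_⟩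
    · have hk' : k ≤ n := by simp at hk; omega
      have := h1 k (by simp; omega)
      rwa [psum_snoc_le w s hk'] at this
    · have := h2 i.castSucc (by rwa [Fin.snoc_castSucc])
      rwa [Fin.coe_castSucc, psum_snoc_le w s (by omega)] at this
    · have := (h1 (n + 1) (by simp)).1
      rwa [psum_snoc_top] at this
    · have := (h1 (n + 1) (by simp)).2
      rwa [psum_snoc_top] at this
    · have := h2 (Fin.last n) (by rwa [Fin.snoc_last])
      rwa [Fin.val_last, psum_snoc_top] at this
  · rintro ⟨⟨h1, h2⟩, hj0, hj1, hj2⟩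
    constructor
    · intro k hk
      simp only [Finset.mem_range] at hk
      rcases Nat.lt_or_ge k (n + 1) with h | h
      · rw [psum_snoc_le w s (by omega)]; exact h1 k (by simp; omega)
      · have : k = n + 1 := by omega
        subst this
        rw [psum_snoc_top]; exact ⟨hj0, hj1⟩
    · intro i hi
      induction i using Fin.lastCases with
      | last =>
        rw [Fin.snoc_last] at hi
        rw [Fin.val_last, psum_snoc_top]
        exact hj2 hi
      | cast i' =>
        rw [Fin.snoc_castSucc] at hi
        rw [Fin.coe_castSucc, psum_snoc_le w s (by omega)]
        exact h2 i' hi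

noncomputable def snocEquiv (n : ℕ) : (Fin n → Step) × Step ≃ (Fin (n + 1) → Step) where
  toFun p := Fin.snoc p.1 p.2
  invFun w := (Fin.init w, w (Fin.last n))
  left_inv p := by simp [Fin.init_snoc, Fin.snoc_last]
  right_inv w := by simp [Fin.snoc_init_self]

lemma D_zero (a : ℕ) (j : ℤ) : D a 0 j = if j = 0 then 1 else 0 := by
  unfold D
  rcases eq_or_ne j 0 with h | h
  · subst h
    rw [if_pos rfl]
    have : (Finset.univ.filter fun w : Fin 0 → Step => Good a w ∧ psum w 0 = 0) =
        Finset.univ := by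
      refine Finset.filter_true_of_mem fun w _ => ⟨⟨?_, ?_⟩, psum_zero w⟩
      · intro k hk
        simp only [Finset.mem_range] at hk
        have hk0 : k = 0 := by omega
        have : psum w k = 0 := by subst hk0; exact psum_zero w
        rw [this]; exact ⟨le_refl 0, by positivity⟩
      · exact fun i => absurd i.2 (by omega)
    rw [this]
    simp [Finset.card_univ]
  · rw [if_neg h]
    rw [Finset.card_eq_zero]
    refine Finset.filter_eq_empty_iff.mpr fun w _ => ?_
    rw [psum_zero]
    tauto

lemma D_succ (a n : ℕ) (j : ℤ) :
    D a (n + 1) j = if 0 ≤ j ∧ 2 * j ≤ (a : ℤ) then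
      (D a n (j - 1) + D a n (j + 1) + if 2 * j + 1 ≤ (a : ℤ) then D a n j else 0)
    else 0 := by
  have key : D a (n + 1) j = ∑ p : (Fin n → Step) × Step,
      if Good a (Fin.snoc p.1 p.2) ∧ psum (Fin.snoc p.1 p.2) (n + 1) = j then 1 else 0 := by
    unfold D
    rw [Finset.card_filter]
    exact (Fintype.sum_equiv (snocEquiv n) _ _ fun p => rfl).symm
  rw [key]
  have eval : ∀ p : (Fin n → Step) × Step,
      (Good a (Fin.snoc p.1 p.2) ∧ psum (Fin.snoc p.1 p.2) (n + 1) = j) ↔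
      ((0 ≤ j ∧ 2 * j ≤ (a : ℤ)) ∧ ((p.2 : ℤ) = 0 → 2 * j + 1 ≤ (a : ℤ)) ∧
        (Good a p.1 ∧ psum p.1 n = j - (p.2 : ℤ))) := by
    intro p
    rw [good_snoc, psum_snoc_top]
    constructor
    · rintro ⟨⟨hg, h0, h1, h2⟩, hj⟩
      rw [hj] at h0 h1 h2
      exact ⟨⟨h0, h1⟩, h2, hg, by omega⟩
    · rintro ⟨⟨h0, h1⟩, h2, hg, hp⟩
      have : psum p.1 n + (p.2 : ℤ) = j := by omega
      rw [this]
      exact ⟨⟨hg, h0, h1, h2⟩, rfl⟩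
  simp only [eval]
  rcases Classical.em (0 ≤ j ∧ 2 * j ≤ (a : ℤ)) with hleg | hleg
  · rw [if_pos hleg]
    simp only [hleg, true_and]
    rw [Fintype.sum_prod_type_right]
    have inner : ∀ s : Step, (∑ w : Fin n → Step,
        if (((s : ℤ) = 0 → 2 * j + 1 ≤ (a : ℤ)) ∧ (Good a w ∧ psum w n = j - (s : ℤ)))
        then 1 else 0) =
        (if ((s : ℤ) = 0 → 2 * j + 1 ≤ (a : ℤ)) then D a n (j - (s : ℤ)) else 0) := by
      intro s
      rcases Classical.em ((s : ℤ) = 0 → 2 * j + 1 ≤ (a : ℤ)) with hc | hc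
      · rw [if_pos hc, D, Finset.card_filter]
        exact Finset.sum_congr rfl fun w _ => if_congr (and_iff_right hc) rfl rfl
      · rw [if_neg hc]
        exact Finset.sum_eq_zero fun w _ => if_neg fun h => hc h.1
    rw [Finset.sum_congr rfl fun s _ => inner s]
    have : ∀ x ∈ ({1, -1, 0} : Finset ℤ), True := fun _ _ => trivial
    rw [Finset.sum_coe_sort (({1, -1, 0} : Finset ℤ))
      (fun x => if (x = 0 → 2 * j + 1 ≤ (a : ℤ)) then D a n (j - x) else 0)]
    rw [show ({1, -1, 0} : Finset ℤ) = insert 1 (insert (-1) {0}) from rfl]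
    rw [Finset.sum_insert (by decide), Finset.sum_insert (by decide), Finset.sum_singleton]
    rw [if_pos (fun h => absurd h (by norm_num)), if_pos (fun h => absurd h (by norm_num))]
    have h0 : ((0 : ℤ) = 0 → 2 * j + 1 ≤ (a : ℤ)) ↔ (2 * j + 1 ≤ (a : ℤ)) := by simp
    rw [sub_neg_eq_add, sub_zero, if_congr h0 rfl rfl]
    ring
  · rw [if_neg hleg]
    simp only [hleg, false_and, if_false]
    exact Finset.sum_const_zero

lemma D_illegal (a n : ℕ) (j : ℤ) (h : ¬(0 ≤ j ∧ 2 * j ≤ (a : ℤ))) : D a n j = 0 := by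
  rw [D, Finset.card_eq_zero]
  refine Finset.filter_eq_empty_iff.mpr fun w _ => ?_
  rintro ⟨⟨h1, _⟩, h2⟩
  exact h (h2 ▸ h1 n (by simp))

lemma le_height {n : ℕ} (w : Fin n → Step) {k : ℕ} (hk : k ≤ n) : psum w k ≤ height w :=
  Finset.le_sup' (psum w) (Finset.mem_range.mpr (by omega))

lemma height_spec {n : ℕ} (w : Fin n → Step) : ∃ k ≤ n, height w = psum w k := by
  obtain ⟨k, hk, h⟩ := Finset.exists_mem_eq_sup' (Finset.nonempty_range_iff.mpr (Nat.succ_ne_zero n)) (psum w)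
  exact ⟨k, by simpa using Nat.lt_succ_iff.mp (Finset.mem_range.mp hk), h⟩

lemma height_nonneg {n : ℕ} (w : Fin n → Step) : 0 ≤ height w := by
  have := le_height w (Nat.zero_le n)
  rwa [psum_zero] at this

lemma amplitude_nonneg {n : ℕ} (w : Fin n → Step) : 0 ≤ amplitude w := by
  have := height_nonneg w
  unfold amplitude
  split <;> omega

lemma psum_le_left {n : ℕ} (w : Fin n → Step) (k : ℕ) : psum w k ≤ (k : ℤ) := by
  induction k with
  | zero => simp [psum_zero]
  | succ k ih =>
    rcases Nat.lt_or_ge k n with hk | hk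
    · rw [psum_succ w k hk]
      have := step_cases (w ⟨k, hk⟩)
      push_cast
      omega
    · rw [psum_of_ge w (by omega), ← psum_of_ge w hk]
      push_cast
      omega

lemma psum_le_right {n : ℕ} (w : Fin n → Step) (k : ℕ) (hk : k ≤ n) :
    psum w k - psum w n ≤ (n : ℤ) - k := by
  obtain ⟨m, hm⟩ : ∃ m, n - k = m := ⟨n - k, rfl⟩
  induction m generalizing k with
  | zero =>
    have : k = n := by omega
    subst this
    simp
  | succ m ih =>
    have hkn : k < n := by omega
    have hstep := step_cases (w ⟨k, hkn⟩)
    have h2 := ih (k + 1) (by omega) (by omega)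
    rw [psum_succ w k hkn] at h2
    push_cast
    omega

lemma two_psum_le {n : ℕ} (w : Fin n → Step) (hw : psum w n = 0) {k : ℕ} (hk : k ≤ n) :
    2 * psum w k ≤ (n : ℤ) := by
  have h1 := psum_le_left w k
  have h2 := psum_le_right w k hk
  omega

lemma two_height_le {n : ℕ} (w : Fin n → Step) (hw : psum w n = 0) :
    2 * height w ≤ (n : ℤ) := by
  obtain ⟨k, hk, h⟩ := height_spec w
  rw [h]
  exact two_psum_le w hw hk

lemma motzkin_amp_iff {a n : ℕ} (w : Fin n → Step) :
    (IsMotzkin w ∧ amplitude w ≤ (a : ℤ)) ↔ (Good a w ∧ psum w n = 0) := by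
  constructor
  · rintro ⟨⟨hpos, hzero⟩, hamp⟩
    have hheight : 2 * height w ≤ (a : ℤ) := by
      unfold amplitude at hamp
      split at hamp <;> omega
    refine ⟨⟨fun k hk => ⟨hpos k hk, ?_⟩, fun i hi => ?_⟩, hzero⟩
    · have := le_height w (Finset.mem_range.mp hk |> Nat.lt_succ_iff.mp)
      omega
    · have hle : psum w ((i : ℕ) + 1) ≤ height w := le_height w (by omega)
      rcases eq_or_lt_of_le hle with heq | hlt
      · have hhh : HasHorizAt w (height w) := ⟨i, hi, heq⟩
        rw [amplitude, if_pos hhh] at hamp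
        omega
      · omega
  · rintro ⟨⟨h1, h2⟩, hzero⟩
    have hpos : ∀ k ∈ Finset.range (n + 1), 0 ≤ psum w k := fun k hk => (h1 k hk).1
    refine ⟨⟨hpos, hzero⟩, ?_⟩
    obtain ⟨k, hk, hh⟩ := height_spec w
    have hha : 2 * height w ≤ (a : ℤ) := by
      rw [hh]
      exact (h1 k (Finset.mem_range.mpr (by omega))).2
    unfold amplitude
    split
    · next hhoriz =>
      obtain ⟨i, hi, hp⟩ := hhoriz
      have := h2 i hi
      omega
    · omega

noncomputable def Mz (n : ℕ) : ℕ :=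
  (Finset.univ.filter fun w : Fin n → Step => IsMotzkin w).card

lemma D_zero_level (a n : ℕ) :
    D a n 0 = (Finset.univ.filter fun w : Fin n → Step =>
      IsMotzkin w ∧ amplitude w ≤ (a : ℤ)).card := by
  rw [D]
  congr 1
  exact Finset.filter_congr fun w _ => (motzkin_amp_iff w).symm

lemma amp_le_of_motzkin {n : ℕ} {w : Fin n → Step} (hw : IsMotzkin w) :
    amplitude w ≤ (n : ℤ) + 1 := by
  have := two_height_le w hw.2
  unfold amplitude
  split <;> omega

lemma D_eq_Mz {a n : ℕ} (h : n + 1 ≤ a) : D a n 0 = Mz n := by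
  rw [D_zero_level, Mz]
  congr 1
  refine Finset.filter_congr fun w _ => ?_
  constructor
  · exact fun h => h.1
  · intro hw
    refine ⟨hw, le_trans (amp_le_of_motzkin hw) ?_⟩
    push_cast
    omega

lemma sum_ite_counter (t : ℤ) (B : ℕ) (h0 : 0 ≤ t) (hB : t ≤ (B : ℤ)) :
    ∑ b ∈ Finset.range B, (if t ≤ (b : ℤ) then (0 : ℤ) else 1) = t := by
  induction B with
  | zero => simpa using (le_antisymm hB h0).symm
  | succ B ih =>
    rw [Finset.sum_range_succ]
    rcases Classical.em (t ≤ (B : ℤ)) with h | h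
    · rw [ih h, if_pos h, add_zero]
    · rw [if_neg h]
      have : ∀ b ∈ Finset.range B, (if t ≤ (b : ℤ) then (0 : ℤ) else 1) = 1 := by
        intro b hb
        simp only [Finset.mem_range] at hb
        rw [if_neg (by push_cast; omega)]
      rw [Finset.sum_congr rfl this, Finset.sum_const, Finset.card_range, nsmul_eq_mul, mul_one]
      omega

lemma A_formula (n : ℕ) :
    A n = ∑ b ∈ Finset.range (2 * n + 2), ((Mz n : ℤ) - (D b n 0 : ℤ)) := by
  rw [A]
  have per : ∀ w ∈ Finset.univ.filter fun w : Fin n → Step => IsMotzkin w,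
      amplitude w = ∑ b ∈ Finset.range (2 * n + 2),
        (if amplitude w ≤ (b : ℤ) then (0 : ℤ) else 1) := by
    intro w hw
    simp only [Finset.mem_filter] at hw
    refine (sum_ite_counter _ _ (amplitude_nonneg w) ?_).symm
    have := amp_le_of_motzkin hw.2
    push_cast
    omega
  rw [Finset.sum_congr rfl per, Finset.sum_comm]
  refine Finset.sum_congr rfl fun b hb => ?_
  have : ∀ w ∈ Finset.univ.filter fun w : Fin n → Step => IsMotzkin w,
      (if amplitude w ≤ (b : ℤ) then (0 : ℤ) else 1) =
      1 - (if amplitude w ≤ (b : ℤ) then (1 : ℤ) else 0) := by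
    intro w _
    split <;> ring
  rw [Finset.sum_congr rfl this, Finset.sum_sub_distrib, Finset.sum_const, nsmul_eq_mul, mul_one]
  rw [D_zero_level]
  congr 1
  rw [← Finset.filter_filter, Finset.sum_boole]

open PowerSeries

noncomputable def cc : PowerSeries ℚ := 1 + X + X ^ 2

noncomputable def xx : PowerSeries ℚ := X * cc⁻¹

lemma cc_const : constantCoeff cc = 1 := by
  rw [cc]
  simp

lemma cc_mul_inv : cc * cc⁻¹ = 1 :=
  PowerSeries.mul_inv_cancel cc (by rw [cc_const]; norm_num)

lemma cc_mul_xx : cc * xx = X := by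
  rw [xx, mul_comm X, ← mul_assoc, cc_mul_inv, one_mul]

lemma coeff_xx_pow {m n : ℕ} (h : m < n) : coeff m (xx ^ n) = 0 := by
  have : xx ^ n = (cc⁻¹) ^ n * X ^ n := by rw [xx, mul_pow, mul_comm]
  rw [this, PowerSeries.coeff_mul_X_pow', if_neg (by omega)]

lemma summable_of_lt {F : ℕ → PowerSeries ℚ} (h : ∀ m n : ℕ, m < n → coeff m (F n) = 0) :
    PSSummable F := by
  intro m
  refine Set.Finite.subset (Set.finite_Iic m) fun n hn => ?_
  simp only [Set.mem_setOf_eq] at hn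
  by_contra hc
  simp only [Set.mem_Iic, not_le] at hc
  exact hn (h m n hc)

lemma PSSum_coeff {F : ℕ → PowerSeries ℚ} (h : ∀ m n : ℕ, m < n → coeff m (F n) = 0)
    (m : ℕ) : coeff m (PSSum F) = ∑ n ∈ Finset.range (m + 1), coeff m (F n) := by
  rw [PSSum, coeff_mk]
  refine finsum_eq_sum_of_support_subset _ fun n hn => ?_
  simp only [Function.mem_support] at hn
  simp only [Finset.coe_range, Set.mem_Iio]
  by_contra hc
  exact hn (h m n (by omega))

noncomputable def Ser (f : ℕ → ℚ) : PowerSeries ℚ := PSSum fun n => C (f n) * xx ^ n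

lemma Ser_vanish (f : ℕ → ℚ) : ∀ m n : ℕ, m < n → coeff m (C (f n) * xx ^ n) = 0 := by
  intro m n h
  rw [coeff_C_mul, coeff_xx_pow h, mul_zero]

lemma Ser_coeff (f : ℕ → ℚ) (m : ℕ) :
    coeff m (Ser f) = ∑ n ∈ Finset.range (m + 1), f n * coeff m (xx ^ n) := by
  rw [Ser, PSSum_coeff (Ser_vanish f)]
  exact Finset.sum_congr rfl fun n _ => coeff_C_mul m (xx ^ n) (f n)

lemma mul_PSSum (g : PowerSeries ℚ) {F : ℕ → PowerSeries ℚ}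
    (h : ∀ m n : ℕ, m < n → coeff m (F n) = 0) :
    g * PSSum F = PSSum fun n => g * F n := by
  have h' : ∀ m n : ℕ, m < n → coeff m (g * F n) = 0 := by
    intro m n hmn
    rw [coeff_mul]
    refine Finset.sum_eq_zero fun p hp => ?_
    have : p.2 ≤ m := Finset.HasAntidiagonal.antidiagonal.snd_le hp
    rw [h p.2 n (by omega), mul_zero]
  ext m
  rw [PSSum_coeff h' m, coeff_mul]
  have expand : ∀ p ∈ Finset.HasAntidiagonal.antidiagonal m,
      coeff p.1 g * coeff p.2 (PSSum F) =
      ∑ n ∈ Finset.range (m + 1), coeff p.1 g * coeff p.2 (F n) := by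
    intro p hp
    have hple : p.2 ≤ m := Finset.HasAntidiagonal.antidiagonal.snd_le hp
    rw [PSSum_coeff h p.2, Finset.mul_sum]
    refine Finset.sum_subset (fun t ht => Finset.mem_range.mpr (by
      have := Finset.mem_range.mp ht; omega)) ?_
    intro t _ ht
    have hgt : p.2 < t := by
      by_contra hc
      exact ht (Finset.mem_range.mpr (by omega))
    rw [h p.2 t hgt, mul_zero]
  rw [Finset.sum_congr rfl expand, Finset.sum_comm]
  exact Finset.sum_congr rfl fun n _ => (coeff_mul m g (F n)).symm

lemma Ser_shift (f : ℕ → ℚ) :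
    Ser f = C (f 0) + xx * Ser (fun n => f (n + 1)) := by
  simp only [Ser]
  rw [mul_PSSum xx (Ser_vanish _)]
  ext m
  rw [map_add, PSSum_coeff (Ser_vanish f) m]
  have hv : ∀ m n : ℕ, m < n → coeff m (xx * (C (f (n + 1)) * xx ^ n)) = 0 := by
    intro m n hmn
    have : xx * (C (f (n + 1)) * xx ^ n) = C (f (n + 1)) * xx ^ (n + 1) := by ring
    rw [this, coeff_C_mul, coeff_xx_pow (by omega), mul_zero]
  rw [PSSum_coeff hv m]
  have e1 : ∀ n ∈ Finset.range (m + 1), coeff m (xx * (C (f (n + 1)) * xx ^ n)) =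
      coeff m (C (f (n + 1)) * xx ^ (n + 1)) := fun n _ => by
    rw [show xx * (C (f (n + 1)) * xx ^ n) = C (f (n + 1)) * xx ^ (n + 1) from by ring]
  rw [Finset.sum_congr rfl e1,
    Finset.sum_range_succ' (fun n => coeff m (C (f n) * xx ^ n)) m,
    Finset.sum_range_succ (fun n => coeff m (C (f (n + 1)) * xx ^ (n + 1))) m,
    Ser_vanish f m (m + 1) (by omega), pow_zero, mul_one]
  ring

lemma Ser_add (f g : ℕ → ℚ) : Ser (fun n => f n + g n) = Ser f + Ser g := by
  ext m
  rw [map_add, Ser_coeff, Ser_coeff, Ser_coeff, ← Finset.sum_add_distrib]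
  exact Finset.sum_congr rfl fun n _ => by ring

lemma Ser_zero : Ser (fun _ => (0 : ℚ)) = 0 := by
  ext m
  rw [Ser_coeff]
  simp

noncomputable def S (a : ℕ) (j : ℤ) : PowerSeries ℚ := Ser fun n => (D a n j : ℚ)

lemma Ser_ite (c : Prop) [Decidable c] (f : ℕ → ℚ) :
    Ser (fun n => if c then f n else 0) = if c then Ser f else 0 := by
  split
  · rfl
  · exact Ser_zero

lemma S_illegal (a : ℕ) (j : ℤ) (h : ¬(0 ≤ j ∧ 2 * j ≤ (a : ℤ))) : S a j = 0 := by
  rw [S]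
  have : (fun n => ((D a n j : ℚ))) = fun _ => (0 : ℚ) := by
    funext n
    rw [D_illegal a n j h]
    norm_num
  rw [this]
  exact Ser_zero

lemma S_eq_legal (a : ℕ) (j : ℤ) (hleg : 0 ≤ j ∧ 2 * j ≤ (a : ℤ)) :
    S a j = C (if j = 0 then 1 else 0) +
      xx * (S a (j - 1) + (S a (j + 1) + if 2 * j + 1 ≤ (a : ℤ) then S a j else 0)) := by
  have hD0 : ((D a 0 j : ℕ) : ℚ) = (if j = 0 then 1 else 0) := by
    rw [D_zero]
    split <;> norm_num
  calc S a j = C ((D a 0 j : ℚ)) + xx * Ser (fun n => ((D a (n + 1) j : ℕ) : ℚ)) := by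
        rw [S]; exact Ser_shift _
    _ = C (if j = 0 then 1 else 0) +
        xx * (S a (j - 1) + (S a (j + 1) + if 2 * j + 1 ≤ (a : ℤ) then S a j else 0)) := by
      have step : (fun n => ((D a (n + 1) j : ℕ) : ℚ)) = fun n =>
          (D a n (j - 1) : ℚ) + ((D a n (j + 1) : ℚ) +
            if 2 * j + 1 ≤ (a : ℤ) then (D a n j : ℚ) else 0) := by
        funext n
        rw [D_succ, if_pos hleg]
        rcases Classical.em (2 * j + 1 ≤ (a : ℤ)) with h | h
        · rw [if_pos h, if_pos h]
          push_cast
          ring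
        · rw [if_neg h, if_neg h]
          push_cast
          ring
      rw [hD0, step, Ser_add, Ser_add, Ser_ite]
      rfl

lemma cc_S_eq (a : ℕ) (j : ℤ) (hleg : 0 ≤ j ∧ 2 * j ≤ (a : ℤ)) :
    cc * S a j = cc * C (if j = 0 then 1 else 0) +
      X * (S a (j - 1) + (S a (j + 1) + if 2 * j + 1 ≤ (a : ℤ) then S a j else 0)) := by
  conv_lhs => rw [S_eq_legal a j hleg]
  rw [mul_add, ← mul_assoc, cc_mul_xx]

lemma chain (a : ℕ) (k : ℕ) : ∀ j : ℕ, a - 2 * j ≤ k → 1 ≤ j → 2 * j ≤ a →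
    (1 - X ^ (a + 3 - 2 * j)) * S a (j : ℤ) =
      X * (1 - X ^ (a + 1 - 2 * j)) * S a ((j : ℤ) - 1) := by
  induction k with
  | zero =>
    intro j hk hj1 hj2
    have ha : a = 2 * j := by omega
    subst ha
    have htop : S (2 * j) ((j : ℤ) + 1) = 0 := by
      refine S_illegal _ _ ?_
      push_cast
      omega
    have heq := cc_S_eq (2 * j) (j : ℤ) ⟨by positivity, by push_cast; omega⟩
    rw [if_neg (by push_cast; omega), if_neg (by push_cast; omega), htop] at heq
    simp only [map_zero, mul_zero, add_zero, zero_add] at heq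
    have h3 : 2 * j + 3 - 2 * j = 3 := by omega
    have h1 : 2 * j + 1 - 2 * j = 1 := by omega
    rw [h3, h1]
    have hcc : (1 - X ^ 3 : PowerSeries ℚ) = (1 - X) * cc := by rw [cc]; ring
    calc (1 - X ^ 3 : PowerSeries ℚ) * S (2 * j) (j : ℤ)
        = (1 - X) * (cc * S (2 * j) (j : ℤ)) := by rw [hcc]; ring
      _ = X * (1 - X ^ 1) * S (2 * j) ((j : ℤ) - 1) := by rw [heq]; ring
  | succ k ih =>
    intro j hk hj1 hj2
    rcases Nat.lt_or_ge (a - 2 * j) (k + 1) with hlt | hge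
    · exact ih j (by omega) hj1 hj2
    rcases Nat.lt_or_ge a (2 * j + 2) with htop | hint
    · -- a = 2j+1 (top odd case)
      have ha : a = 2 * j + 1 := by omega
      subst ha
      have htop0 : S (2 * j + 1) ((j : ℤ) + 1) = 0 := by
        refine S_illegal _ _ ?_
        push_cast
        omega
      have heq := cc_S_eq (2 * j + 1) (j : ℤ) ⟨by positivity, by push_cast; omega⟩
      rw [if_neg (by push_cast; omega), if_pos (by push_cast; omega), htop0] at heq
      simp only [map_zero, mul_zero, add_zero, zero_add] at heq
      have h3 : 2 * j + 1 + 3 - 2 * j = 4 := by omega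
      have h1 : 2 * j + 1 + 1 - 2 * j = 2 := by omega
      rw [h3, h1]
      have key : (cc - X) * S (2 * j + 1) (j : ℤ) = X * S (2 * j + 1) ((j : ℤ) - 1) := by
        linear_combination heq
      have hcc : (1 - X ^ 4 : PowerSeries ℚ) = (1 - X ^ 2) * (1 + X ^ 2) := by ring
      have hcc2 : (1 + X ^ 2 : PowerSeries ℚ) = cc - X := by rw [cc]; ring
      calc (1 - X ^ 4 : PowerSeries ℚ) * S (2 * j + 1) (j : ℤ)
          = (1 - X ^ 2) * ((cc - X) * S (2 * j + 1) (j : ℤ)) := by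
            rw [hcc, hcc2]; ring
        _ = X * (1 - X ^ 2) * S (2 * j + 1) ((j : ℤ) - 1) := by rw [key]; ring
    · -- interior case: a ≥ 2j + 2
      obtain ⟨e, he⟩ : ∃ e : ℕ, a = 2 * j + 1 + e := ⟨a - (2 * j + 1), by omega⟩
      have hih := ih (j + 1) (by omega) (by omega) (by omega)
      have hexp1 : a + 3 - 2 * (j + 1) = e + 2 := by omega
      have hexp2 : a + 1 - 2 * (j + 1) = e := by omega
      rw [hexp1, hexp2] at hih
      have hcast : ((j : ℤ) + 1) - 1 = (j : ℤ) := by ring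
      push_cast at hih
      rw [hcast] at hih
      -- hih : (1 - X^(e+2)) * S a (j+1) = X * (1 - X^e) * S a j
      have heq := cc_S_eq a (j : ℤ) ⟨by positivity, by push_cast; omega⟩
      rw [if_neg (by push_cast; omega), if_pos (by push_cast; omega)] at heq
      simp only [map_zero, mul_zero, add_zero, zero_add] at heq
      have hexp3 : a + 3 - 2 * j = e + 4 := by omega
      have hexp4 : a + 1 - 2 * j = e + 2 := by omega
      rw [hexp3, hexp4]
      have hccdef : cc = 1 + X + X ^ 2 := rfl
      rw [hccdef] at heq
      linear_combination (1 - X ^ (e + 2)) * heq + X * hih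

lemma ccdef : cc = 1 + X + X ^ 2 := rfl

lemma GF (a : ℕ) : (1 - X ^ (a + 3)) * S a 0 = cc * (1 - X ^ (a + 1)) := by
  have hm1 : S a (0 - 1 : ℤ) = 0 := S_illegal a _ (by norm_num)
  rcases Nat.lt_or_ge a 1 with h0 | h1
  · interval_cases a
    have h1 : S 0 (0 + 1 : ℤ) = 0 := S_illegal 0 _ (by norm_num)
    have heq := cc_S_eq 0 0 ⟨le_refl 0, by norm_num⟩
    rw [if_pos rfl, if_neg (by norm_num), hm1, h1, map_one] at heq
    rw [ccdef] at heq ⊢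
    linear_combination (1 - X) * heq
  rcases Nat.lt_or_ge a 2 with h2 | h2
  · interval_cases a
    have hS1 : S 1 (0 + 1 : ℤ) = 0 := S_illegal 1 _ (by norm_num)
    have heq := cc_S_eq 1 0 ⟨le_refl 0, by norm_num⟩
    rw [if_pos rfl, if_pos (by norm_num), hm1, hS1, map_one] at heq
    rw [ccdef] at heq ⊢
    linear_combination (1 - X ^ 2) * heq
  · obtain ⟨e, he⟩ : ∃ e : ℕ, a = e + 1 := ⟨a - 1, by omega⟩
    have he1 : 1 ≤ e := by omega
    have hih := chain a a 1 (by omega) (le_refl 1) (by omega)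
    have hx1 : a + 3 - 2 * 1 = e + 2 := by omega
    have hx2 : a + 1 - 2 * 1 = e := by omega
    rw [hx1, hx2] at hih
    norm_num at hih
    -- hih : (1 - X^(e+2)) * S a 1 = X * (1 - X^e) * S a 0
    have heq := cc_S_eq a 0 ⟨le_refl 0, by positivity⟩
    rw [if_pos rfl, if_pos (by push_cast; omega), hm1, map_one] at heq
    norm_num at heq
    -- heq : cc * S a 0 = cc + X * (S a 1 + S a 0)
    have hx3 : a + 3 = e + 4 := by omega
    have hx4 : a + 1 = e + 2 := by omega
    rw [hx3, hx4, ccdef] at *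
    linear_combination (1 - X ^ (e + 2)) * heq + X * hih

noncomputable def geom (k : ℕ) : PowerSeries ℚ :=
  PowerSeries.mk fun j => if k ∣ j then 1 else 0

lemma geom_mul (k : ℕ) (hk : 1 ≤ k) : (1 - X ^ k) * geom k = 1 := by
  ext m
  rw [sub_mul, one_mul, map_sub, mul_comm (X ^ k : PowerSeries ℚ),
    PowerSeries.coeff_mul_X_pow', PowerSeries.coeff_one]
  simp only [geom, coeff_mk]
  by_cases hm : m = 0
  · subst hm
    rw [if_pos (dvd_zero k), if_neg (by omega : ¬ k ≤ 0), if_pos rfl]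
    norm_num
  · rw [if_neg hm]
    by_cases hge : k ≤ m
    · rw [if_pos hge]
      have hiff : k ∣ m ↔ k ∣ m - k := by
        constructor
        · intro h; exact Nat.dvd_sub h (dvd_refl k)
        · intro h
          have hmm : m = (m - k) + k := by omega
          rw [hmm]; exact Nat.dvd_add h (dvd_refl k)
      by_cases hd : k ∣ m
      · rw [if_pos hd, if_pos (hiff.mp hd)]; norm_num
      · rw [if_neg hd, if_neg (fun hh => hd (hiff.mpr hh))]; norm_num
    · rw [if_neg hge, if_neg (fun hd => hm (Nat.eq_zero_of_dvd_of_lt hd (by omega)))]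
      norm_num

lemma Ser_R_closed (a : ℕ) :
    Ser (fun n => (D a n 0 : ℚ)) = cc * (1 - X ^ (a + 1)) * geom (a + 3) := by
  have hg := geom_mul (a + 3) (by omega)
  calc Ser (fun n => (D a n 0 : ℚ)) = S a 0 := rfl
    _ = (1 - X ^ (a + 3)) * geom (a + 3) * S a 0 := by rw [hg, one_mul]
    _ = geom (a + 3) * ((1 - X ^ (a + 3)) * S a 0) := by ring
    _ = geom (a + 3) * (cc * (1 - X ^ (a + 1))) := by rw [GF]
    _ = cc * (1 - X ^ (a + 1)) * geom (a + 3) := by ring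

lemma diff_closed (a : ℕ) :
    cc - Ser (fun n => (D a n 0 : ℚ)) = cc * (1 - X ^ 2) * X ^ (a + 1) * geom (a + 3) := by
  rw [Ser_R_closed]
  have hg := geom_mul (a + 3) (by omega)
  linear_combination (-cc) * hg

noncomputable def Efull : PowerSeries ℚ :=
  PowerSeries.mk fun m => ((((m + 2).divisors.filter fun d => 3 ≤ d).card : ℕ) : ℚ)

noncomputable def Dv : PowerSeries ℚ :=
  PowerSeries.mk fun m => if m = 0 then (0 : ℚ) else (m.divisors.card : ℚ)

lemma coeff_XgeomA (a l : ℕ) :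
    coeff l (X ^ (a + 1) * geom (a + 3)) =
      if (a + 3) ∣ (l + 2) ∧ a + 1 ≤ l then 1 else 0 := by
  rw [mul_comm, PowerSeries.coeff_mul_X_pow']
  by_cases hle : a + 1 ≤ l
  · rw [if_pos hle, geom, coeff_mk]
    have hiff : (a + 3) ∣ (l - (a + 1)) ↔ (a + 3) ∣ (l + 2) := by
      constructor
      · intro h
        have : l + 2 = (l - (a + 1)) + (a + 3) := by omega
        rw [this]; exact Nat.dvd_add h (dvd_refl _)
      · intro h
        have h2 : (a + 3) ∣ ((l + 2) - (a + 3)) := Nat.dvd_sub h (dvd_refl _)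
        have : (l + 2) - (a + 3) = l - (a + 1) := by omega
        rwa [this] at h2
    by_cases hd : (a + 3) ∣ (l + 2)
    · rw [if_pos (hiff.mpr hd), if_pos ⟨hd, hle⟩]
    · rw [if_neg (fun hh => hd (hiff.mp hh)), if_neg (fun hh => hd hh.1)]
  · rw [if_neg hle, if_neg (fun hh => hle hh.2)]

lemma partial_E {m l : ℕ} (hl : l ≤ m) :
    coeff l (∑ b ∈ Finset.range (2 * m + 2), X ^ (b + 1) * geom (b + 3)) =
      coeff l Efull := by
  rw [map_sum, Finset.sum_congr rfl fun b _ => coeff_XgeomA b l, Finset.sum_boole,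
    Efull, coeff_mk]
  congr 1
  refine Finset.card_bij (fun b _ => b + 3) ?_ ?_ ?_
  · intro b hb
    simp only [Finset.mem_filter, Finset.mem_range] at hb
    simp only [Finset.mem_filter, Nat.mem_divisors]
    exact ⟨⟨hb.2.1, by omega⟩, by omega⟩
  · intro b1 h1 b2 h2 h
    have h' : b1 + 3 = b2 + 3 := h
    omega
  · intro d hd
    simp only [Finset.mem_filter, Nat.mem_divisors] at hd
    obtain ⟨⟨hdvd, _⟩, h3⟩ := hd
    have hdle : d ≤ l + 2 := Nat.le_of_dvd (by omega) hdvd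
    have hd3 : d - 3 + 3 = d := by omega
    refine ⟨d - 3, ?_, show d - 3 + 3 = d by omega⟩
    simp only [Finset.mem_filter, Finset.mem_range]
    refine ⟨by omega, by rw [hd3]; exact hdvd, by omega⟩

lemma coeff_mul_congr (g P Q : PowerSeries ℚ) (m : ℕ)
    (h : ∀ l ≤ m, coeff l P = coeff l Q) :
    coeff m (g * P) = coeff m (g * Q) := by
  rw [coeff_mul, coeff_mul]
  exact Finset.sum_congr rfl fun p hp => by
    rw [h p.2 (Finset.HasAntidiagonal.antidiagonal.snd_le hp)]

lemma coeff_diff_zero (a m : ℕ) (h : m < a + 1) :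
    coeff m (cc * (1 - X ^ 2) * X ^ (a + 1) * geom (a + 3)) = 0 := by
  have e : cc * (1 - X ^ 2) * X ^ (a + 1) * geom (a + 3) =
      (cc * (1 - X ^ 2) * geom (a + 3)) * X ^ (a + 1) := by ring
  rw [e, PowerSeries.coeff_mul_X_pow', if_neg (by omega)]

lemma SerMz_coeff (m : ℕ) : coeff m (Ser fun n => (Mz n : ℚ)) = coeff m cc := by
  have h1 : coeff m (Ser fun n => (Mz n : ℚ)) =
      coeff m (Ser fun n => (D (2 * m + 2) n 0 : ℚ)) := by
    rw [Ser_coeff, Ser_coeff]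
    refine Finset.sum_congr rfl fun n hn => ?_
    have hn' : n ≤ m := by have := Finset.mem_range.mp hn; omega
    rw [D_eq_Mz (by omega)]
  have h3 : coeff m (cc - Ser fun n => (D (2 * m + 2) n 0 : ℚ)) = 0 := by
    rw [diff_closed]
    exact coeff_diff_zero _ _ (by omega)
  rw [map_sub] at h3
  rw [h1]
  linarith

lemma T_closed : Ser (fun n => ((A n : ℤ) : ℚ)) = cc * (1 - X ^ 2) * Efull := by
  ext m
  rw [Ser_coeff]
  have hA : ∀ n ∈ Finset.range (m + 1), ((A n : ℤ) : ℚ) * coeff m (xx ^ n) =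
      ∑ b ∈ Finset.range (2 * m + 2),
        ((Mz n : ℚ) - (D b n 0 : ℚ)) * coeff m (xx ^ n) := by
    intro n hn
    have hnm : n ≤ m := by have := Finset.mem_range.mp hn; omega
    have hcast : ((A n : ℤ) : ℚ) =
        ∑ b ∈ Finset.range (2 * n + 2), ((Mz n : ℚ) - (D b n 0 : ℚ)) := by
      rw [A_formula]
      push_cast
      rfl
    rw [hcast, ← Finset.sum_mul, Finset.sum_subset
      (Finset.range_subset_range.mpr (by omega : 2 * n + 2 ≤ 2 * m + 2)) ?_, Finset.sum_mul]
    intro b hb hnb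
    have hb1 : n + 1 ≤ b := by
      have h1 := Finset.mem_range.mp hb
      have h2 : ¬ b < 2 * n + 2 := fun hh => hnb (Finset.mem_range.mpr hh)
      omega
    rw [D_eq_Mz hb1]
    ring
  rw [Finset.sum_congr rfl hA, Finset.sum_comm]
  have inner : ∀ b ∈ Finset.range (2 * m + 2),
      (∑ n ∈ Finset.range (m + 1), ((Mz n : ℚ) - (D b n 0 : ℚ)) * coeff m (xx ^ n)) =
      coeff m (cc * (1 - X ^ 2) * (X ^ (b + 1) * geom (b + 3))) := by
    intro b _
    have e1 : (∑ n ∈ Finset.range (m + 1),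
        ((Mz n : ℚ) - (D b n 0 : ℚ)) * coeff m (xx ^ n)) =
        coeff m (Ser fun n => (Mz n : ℚ)) -
          coeff m (Ser fun n => (D b n 0 : ℚ)) := by
      rw [Ser_coeff, Ser_coeff, ← Finset.sum_sub_distrib]
      exact Finset.sum_congr rfl fun n _ => by ring
    rw [e1, SerMz_coeff, ← map_sub, diff_closed]
    congr 1
    ring
  rw [Finset.sum_congr rfl inner, ← map_sum, ← Finset.mul_sum]
  exact coeff_mul_congr _ _ _ m fun l hl => partial_E hl

lemma divisors_low (k : ℕ) (hk : 1 ≤ k) :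
    ((k.divisors.filter fun d => ¬ 3 ≤ d).card : ℚ) = if 2 ∣ k then 2 else 1 := by
  have hset : (k.divisors.filter fun d => ¬ 3 ≤ d) =
      if 2 ∣ k then ({1, 2} : Finset ℕ) else {1} := by
    split
    · next h2 =>
      ext d
      simp only [Finset.mem_filter, Nat.mem_divisors, Finset.mem_insert,
        Finset.mem_singleton]
      constructor
      · rintro ⟨⟨hdvd, hne⟩, hd3⟩
        have : d ≠ 0 := fun h => by
          subst h; exact hne (Nat.eq_zero_of_zero_dvd hdvd)
        omega
      · rintro (rfl | rfl)
        · exact ⟨⟨one_dvd k, by omega⟩, by omega⟩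
        · exact ⟨⟨h2, by omega⟩, by omega⟩
    · next h2 =>
      ext d
      simp only [Finset.mem_filter, Nat.mem_divisors, Finset.mem_singleton]
      constructor
      · rintro ⟨⟨hdvd, hne⟩, hd3⟩
        have : d ≠ 0 := fun h => by
          subst h; exact hne (Nat.eq_zero_of_zero_dvd hdvd)
        have : d ≠ 2 := fun h => by subst h; exact h2 hdvd
        omega
      · rintro rfl
        exact ⟨⟨one_dvd k, by omega⟩, by omega⟩
  rw [hset]
  split
  · norm_num
  · norm_num

lemma divisors_split (k : ℕ) :
    ((k.divisors.card : ℚ)) = ((k.divisors.filter fun d => ¬ 3 ≤ d).card : ℚ) +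
      ((k.divisors.filter fun d => 3 ≤ d).card : ℚ) := by
  have := Finset.card_filter_add_card_filter_not
    (s := k.divisors) (p := fun d => 3 ≤ d)
  push_cast [← this]
  ring

lemma Efull_step : ((1 : PowerSeries ℚ) - X ^ 2) * (Dv - X ^ 2 * Efull) =
    X + 2 * X ^ 2 := by
  have expand : ((1 : PowerSeries ℚ) - X ^ 2) * (Dv - X ^ 2 * Efull) =
      Dv - (Dv + Efull) * X ^ 2 + Efull * X ^ 4 := by ring
  rw [expand, show (X + 2 * X ^ 2 : PowerSeries ℚ) = X ^ 1 + (X ^ 2 + X ^ 2) from by ring]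
  ext m
  simp only [map_add, map_sub, PowerSeries.coeff_mul_X_pow', PowerSeries.coeff_X_pow,
    Dv, Efull, coeff_mk]
  rcases Nat.lt_or_ge m 4 with h4 | h4
  · interval_cases m <;>
      norm_num [show (Nat.divisors 1).card = 1 from by decide,
        show (Nat.divisors 2).card = 2 from by decide,
        show (Nat.divisors 3).card = 2 from by decide,
        show ((Nat.divisors 2).filter fun d => 3 ≤ d).card = 0 from by decide,
        show ((Nat.divisors 3).filter fun d => 3 ≤ d).card = 1 from by decide]
  · rw [if_neg (by omega : ¬ m = 0), if_pos (by omega : 2 ≤ m),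
      if_neg (by omega : ¬ m - 2 = 0), if_pos (by omega : 4 ≤ m),
      if_neg (by omega : ¬ m = 1), if_neg (by omega : ¬ m = 2),
      show m - 2 + 2 = m from by omega, show m - 4 + 2 = m - 2 from by omega]
    have k1 := divisors_split m
    have k2 := divisors_split (m - 2)
    have k3 := divisors_low m (by omega)
    have k4 := divisors_low (m - 2) (by omega)
    have hdd : 2 ∣ m ↔ 2 ∣ (m - 2) := by omega
    by_cases h2 : 2 ∣ m
    · rw [if_pos h2] at k3
      rw [if_pos (hdd.mp h2)] at k4
      linarith
    · rw [if_neg h2] at k3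
      rw [if_neg (fun hh => h2 (hdd.mpr hh))] at k4
      linarith

open PowerSeries in
/-- In `ℚ[[v]]`: the family `(A n · (v (1+v+v²)⁻¹)^n)` is formally summable and
`v² ∑_{n≥0} A n (v (1+v+v²)⁻¹)^n
  = (1+v+v²)(1-v²) ∑_{h,k ≥ 1} v^{hk} - v(1+2v)(1+v+v²)`,
where `∑_{h,k≥1} v^{hk} = ∑_{m≥1} d(m) v^m` with `d(m)` the number of divisors of `m`. -/
theorem amplitude_genfun :
    PSSummable (fun n => C ((A n : ℚ)) * (X * (1 + X + X ^ 2 : PowerSeries ℚ)⁻¹) ^ n) ∧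
    (X : PowerSeries ℚ) ^ 2 *
        PSSum (fun n => C ((A n : ℚ)) * (X * (1 + X + X ^ 2 : PowerSeries ℚ)⁻¹) ^ n)
      = (1 + X + X ^ 2) * (1 - X ^ 2) *
          (PowerSeries.mk fun m => if m = 0 then (0 : ℚ) else (m.divisors.card : ℚ))
        - X * (1 + 2 * X) * (1 + X + X ^ 2) := by
  constructor
  · exact summable_of_lt fun m n h => Ser_vanish (fun n => ((A n : ℤ) : ℚ)) m n h
  · have hps : PSSum (fun n => C ((A n : ℚ)) * (X * (1 + X + X ^ 2 : PowerSeries ℚ)⁻¹) ^ n)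
        = Ser (fun n => ((A n : ℤ) : ℚ)) := rfl
    have hDv : (PowerSeries.mk fun m => if m = 0 then (0 : ℚ) else (m.divisors.card : ℚ))
        = Dv := rfl
    rw [hps, T_closed, hDv, ccdef]
    linear_combination (-(1 + X + X ^ 2 : PowerSeries ℚ)) * Efull_step
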